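/- Let A and B be real numbers with 0 ≤ A ≤ 16, −8 ≤ B ≤ 8 and A + B > 16, and set μ* := √((A+B−16)/(A−B)). For any μ₀ with 0 < μ₀ < μ*, the sequence defined by μ_{k+1} = F(μ_k) is strictly increasing and converges to μ*. -/

import Mathlib

/-- `F A B μ = (μ/16)·(A + B − μ²·(A − B))`. -/
noncomputable def F (A B μ : ℝ) : ℝ := μ / 16 * (A + B - μ ^ 2 * (A - B))

/-- If `0 ≤ A ≤ 16`, `−8 ≤ B ≤ 8` and `A + B > 16`, then for any starting point
`0 < μ₀ < μ* := √((A+B−16)/(A−B))`, the sequence defined by `μ_{k+1} = F(μ_k)`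
is strictly increasing and converges to `μ*`. -/
theorem stmt_5 (A B : ℝ) (hA0 : 0 ≤ A) (hA : A ≤ 16) (hB0 : -8 ≤ B) (hB : B ≤ 8)
    (hAB : A + B > 16) (μ₀ : ℝ) (hμ0 : 0 < μ₀)
    (hμ : μ₀ < Real.sqrt ((A + B - 16) / (A - B)))
    (u : ℕ → ℝ) (hu0 : u 0 = μ₀) (hrec : ∀ k, u (k + 1) = F A B (u k)) :
    StrictMono u ∧
    Filter.Tendsto u Filter.atTop (nhds (Real.sqrt ((A + B - 16) / (A - B)))) := by
  set m := Real.sqrt ((A + B - 16) / (A - B)) with hmdef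
  have hABd : 0 < A - B := by nlinarith
  have hc : 0 < (A + B - 16) / (A - B) := div_pos (by linarith) hABd
  have hm : 0 < m := Real.sqrt_pos.mpr hc
  have hm2 : m ^ 2 * (A - B) = A + B - 16 := by
    rw [hmdef, Real.sq_sqrt hc.le]
    field_simp
  -- invariant
  have key : ∀ k, 0 < u k ∧ u k < m := by
    intro k
    induction k with
    | zero => rw [hu0]; exact ⟨hμ0, hμ⟩
    | succ n ih =>
      obtain ⟨hp, hl⟩ := ih
      constructor
      · rw [hrec, F]
        have : u n ^ 2 < m ^ 2 := by nlinarith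
        nlinarith [mul_pos hp hABd]
      · rw [hrec, F]
        have hb : u n * (A - B) * (m + u n) < 16 := by
          nlinarith [mul_pos (mul_pos (sub_pos.mpr hl) hABd)
            (by linarith : (0:ℝ) < 2 * m + u n)]
        nlinarith [mul_pos (sub_pos.mpr hl) (sub_pos.mpr hb)]
  have hlt : ∀ k, u k < u (k + 1) := by
    intro k
    obtain ⟨hp, hl⟩ := key k
    rw [hrec, F]
    nlinarith [mul_pos hp hABd, mul_pos (mul_pos hp hABd) (sub_pos.mpr hl)]
  have hsm : StrictMono u := strictMono_nat_of_lt_succ hlt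
  refine ⟨hsm, ?_⟩
  have hbdd : BddAbove (Set.range u) := ⟨m, by rintro x ⟨k, rfl⟩; exact (key k).2.le⟩
  have hconv : Filter.Tendsto u Filter.atTop (nhds (⨆ k, u k)) :=
    tendsto_atTop_ciSup hsm.monotone hbdd
  set L := ⨆ k, u k with hLdef
  have hLle : L ≤ m := ciSup_le fun k => (key k).2.le
  have hLpos : 0 < L := lt_of_lt_of_le (hu0 ▸ hμ0 : (0:ℝ) < u 0) (le_ciSup hbdd 0)
  have hFcont : Continuous (F A B) := by unfold F; continuity
  have h1 : Filter.Tendsto (fun k => u (k + 1)) Filter.atTop (nhds L) :=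
    hconv.comp (Filter.tendsto_add_atTop_nat 1)
  have h2 : Filter.Tendsto (fun k => F A B (u k)) Filter.atTop (nhds (F A B L)) :=
    (hFcont.tendsto L).comp hconv
  have hFL : F A B L = L := by
    refine tendsto_nhds_unique h2 ?_
    simpa only [hrec] using h1
  have hL2 : L ^ 2 = m ^ 2 := by
    rw [F] at hFL
    have h16 : A + B - L ^ 2 * (A - B) = 16 := by
      field_simp at hFL
      linarith
    have : L ^ 2 * (A - B) = m ^ 2 * (A - B) := by rw [hm2]; linarith
    exact mul_right_cancel₀ hABd.ne' this
  have hLm : L = m := by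
    have := Real.sqrt_sq hLpos.le
    rw [← this, hL2, Real.sqrt_sq hm.le]
  rwa [hLm] at hconv
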